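/- Any free continuous ℤ^d-action on the Cantor set has dynamical asymptotic dimension at most 3^d − 1. -/

import Mathlib

/-- The reachable set of `x` by `F`-paths staying in `U` (additive group version). -/
def reachSet {Γ X : Type*} [AddGroup Γ] (act : X → Γ → X) (F : Finset Γ) (U : Set X)
    (x : X) : Set X :=
  {y | ∃ l : List Γ, l ≠ [] ∧ (∀ γ ∈ l, γ ∈ F) ∧ y = act x l.sum ∧
    ∀ k, 1 ≤ k → k ≤ l.length → act x (l.take k).sum ∈ U}

/-- The dynamical asymptotic dimension of `act` is at most `m`. -/
def DADle {Γ X : Type*} [AddGroup Γ] [TopologicalSpace X] (act : X → Γ → X) (m : ℕ) : Prop :=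
  ∀ F : Finset Γ, ∃ U : Fin (m + 1) → Set X, (∀ i, IsOpen (U i)) ∧ (⋃ i, U i) = Set.univ ∧
    ∃ M : ℕ, ∀ i, ∀ x ∈ U i,
      (reachSet act F (U i) x).Finite ∧ (reachSet act F (U i) x).ncard ≤ M

/-- The dynamical asymptotic dimension of an action, as an extended natural number. -/
noncomputable def DAD {Γ X : Type*} [AddGroup Γ] [TopologicalSpace X] (act : X → Γ → X) : ℕ∞ :=
  sInf {m : ℕ∞ | ∃ k : ℕ, m = (k : ℕ∞) ∧ DADle act k}

namespace Stmt14

open Set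

variable {X : Type*} {d : ℕ}

/-- The sup-norm ball of radius `S` in `ℤ^d`, as a finset. -/
noncomputable def ballF (d S : ℕ) : Finset (Fin d → ℤ) :=
  Fintype.piFinset fun _ => Finset.Icc (-(S : ℤ)) (S : ℤ)

lemma mem_ballF {S : ℕ} {n : Fin d → ℤ} :
    n ∈ ballF d S ↔ ∀ j, -(S : ℤ) ≤ n j ∧ n j ≤ (S : ℤ) := by
  simp [ballF, Fintype.mem_piFinset, Finset.mem_Icc]

lemma zero_mem_ballF (d S : ℕ) : (0 : Fin d → ℤ) ∈ ballF d S := by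
  rw [mem_ballF]; intro j; simp

lemma neg_mem_ballF {S : ℕ} {n : Fin d → ℤ} (h : n ∈ ballF d S) : -n ∈ ballF d S := by
  rw [mem_ballF] at h ⊢
  intro j
  have := h j
  simp only [Pi.neg_apply]
  omega

/-- The set of points having a translate by `ballF d S` inside `T`. -/
def markE (act : X → (Fin d → ℤ) → X) (S : ℕ) (T : Set X) : Set X :=
  ⋃ n ∈ ballF d S, (fun x => act x n) ⁻¹' T

lemma mem_markE {act : X → (Fin d → ℤ) → X} {S : ℕ} {T : Set X} {x : X} :
    x ∈ markE act S T ↔ ∃ n ∈ ballF d S, act x n ∈ T := by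
  simp [markE]

lemma markE_mono {act : X → (Fin d → ℤ) → X} {S : ℕ} {T T' : Set X} (h : T ⊆ T') :
    markE act S T ⊆ markE act S T' := by
  intro x hx
  rw [mem_markE] at hx ⊢
  obtain ⟨n, hn, hnT⟩ := hx
  exact ⟨n, hn, h hnT⟩

lemma isClopen_markE [TopologicalSpace X] {act : X → (Fin d → ℤ) → X} {S : ℕ} {T : Set X}
    (hactc : ∀ n, Continuous fun x => act x n) (hT : IsClopen T) :
    IsClopen (markE act S T) :=
  isClopen_biUnion_finset fun n _ => hT.preimage (hactc n)

/-- Greedy construction of a marker set from a list of small clopen sets. -/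
def markChain (act : X → (Fin d → ℤ) → X) (S : ℕ) : List (Set X) → Set X
  | [] => (∅ : Set X)
  | V :: l => (V \ markE act S (markChain act S l)) ∪ markChain act S l

lemma isClopen_markChain [TopologicalSpace X] {act : X → (Fin d → ℤ) → X} {S : ℕ}
    (hactc : ∀ n, Continuous fun x => act x n) :
    ∀ l : List (Set X), (∀ V ∈ l, IsClopen V) → IsClopen (markChain act S l)
  | [] => fun _ => isClopen_empty
  | V :: l => fun h => by
      have hl := isClopen_markChain (act := act) (S := S) hactc l
        (fun W hW => h W (List.mem_cons_of_mem _ hW))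
      exact ((h V List.mem_cons_self).diff (isClopen_markE hactc hl)).union hl

lemma markChain_sep {act : X → (Fin d → ℤ) → X} {S : ℕ}
    (hact0 : ∀ x, act x 0 = x)
    (hactadd : ∀ x m n, act (act x m) n = act x (m + n)) :
    ∀ l : List (Set X),
      (∀ V ∈ l, ∀ v ∈ V, ∀ n ∈ ballF d S, act v n ∈ V → n = 0) →
      ∀ a ∈ markChain act S l, ∀ n ∈ ballF d S, act a n ∈ markChain act S l → n = 0
  | [] => fun _ a ha => absurd ha (by simp [markChain])
  | V :: l => fun h a ha n hn hb => by
      have IH := markChain_sep (act := act) (S := S) hact0 hactadd l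
        (fun W hW => h W (List.mem_cons_of_mem _ hW))
      simp only [markChain, Set.mem_union] at ha hb
      rcases ha with ha | ha <;> rcases hb with hb | hb
      · exact h V List.mem_cons_self a ha.1 n hn hb.1
      · -- a ∈ V \ markE, act a n ∈ chain l : then a ∈ markE (chain l), contradiction
        exact absurd (mem_markE.mpr ⟨n, hn, hb⟩) ha.2
      · -- a ∈ chain l, act a n ∈ V \ markE : then act a n ∈ markE (chain l)
        have : act (act a n) (-n) = a := by
          rw [hactadd]; simp [hact0]
        exact absurd (mem_markE.mpr ⟨-n, neg_mem_ballF hn, by rw [this]; exact ha⟩) hb.2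
      · exact IH a ha n hn hb

lemma markChain_absorb {act : X → (Fin d → ℤ) → X} {S : ℕ}
    (hact0 : ∀ x, act x 0 = x) :
    ∀ l : List (Set X), ∀ V ∈ l, ∀ x ∈ V, x ∈ markE act S (markChain act S l)
  | [] => fun V hV => absurd hV (by simp)
  | W :: l => fun V hV x hx => by
      have hsub : markChain act S l ⊆ markChain act S (W :: l) := by
        intro z hz; exact Set.mem_union_right _ hz
      rcases List.mem_cons.mp hV with rfl | hV'
      · by_cases hE : x ∈ markE act S (markChain act S l)
        · exact markE_mono hsub hE
        · have : x ∈ markChain act S (V :: l) :=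
            Set.mem_union_left _ ⟨hx, hE⟩
          exact mem_markE.mpr ⟨0, zero_mem_ballF d S, by rw [hact0]; exact this⟩
      · exact markE_mono hsub (markChain_absorb (act := act) (S := S) hact0 l V hV' x hx)

/-- Existence of a clopen `S`-separated, `S`-syndetic marker set. -/
theorem exists_marker [TopologicalSpace X] [CompactSpace X]
    (act : X → (Fin d → ℤ) → X)
    (hact0 : ∀ x, act x 0 = x)
    (hactadd : ∀ x m n, act (act x m) n = act x (m + n))
    (hactc : ∀ n, Continuous fun x => act x n)
    (hfree : ∀ x n, act x n = x → n = 0)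
    (hclo : ∀ x y : X, x ≠ y → ∃ P : Set X, IsClopen P ∧ x ∈ P ∧ y ∉ P)
    (S : ℕ) :
    ∃ A : Set X, IsOpen A ∧
      (∀ a ∈ A, ∀ n ∈ ballF d S, act a n ∈ A → n = 0) ∧
      (∀ x : X, ∃ n ∈ ballF d S, act x n ∈ A) := by
  -- small separated clopen neighborhoods
  have hV : ∀ x : X, ∃ V : Set X, IsClopen V ∧ x ∈ V ∧
      ∀ v ∈ V, ∀ n ∈ ballF d S, act v n ∈ V → n = 0 := by
    intro x
    have hC : ∀ n : Fin d → ℤ, ∃ C : Set X, IsClopen C ∧ x ∈ C ∧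
        (n ≠ 0 → ∀ v ∈ C, act v n ∉ C) := by
      intro n
      by_cases hn : n = 0
      · exact ⟨Set.univ, isClopen_univ, Set.mem_univ x, fun h => absurd hn h⟩
      · have hxz : x ≠ act x n := by
          intro h
          exact hn (hfree x n h.symm)
        obtain ⟨P, hP, hxP, hzP⟩ := hclo x (act x n) hxz
        refine ⟨P ∩ (fun v => act v n) ⁻¹' Pᶜ,
          hP.inter (hP.compl.preimage (hactc n)), ⟨hxP, hzP⟩, ?_⟩
        intro _ v hv hcon
        exact hv.2 hcon.1
    choose C hC1 hC2 hC3 using hC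
    refine ⟨⋂ n ∈ ballF d S, C n, isClopen_biInter_finset fun n _ => hC1 n,
      Set.mem_iInter₂.mpr fun n _ => hC2 n, ?_⟩
    intro v hv n hn hvn
    by_cases h0 : n = 0
    · exact h0
    · exact absurd (Set.mem_iInter₂.mp hvn n hn)
        (hC3 n h0 v (Set.mem_iInter₂.mp hv n hn))
  choose V hV1 hV2 hV3 using hV
  obtain ⟨t, ht⟩ := IsCompact.elim_finite_subcover isCompact_univ V
    (fun x => (hV1 x).isOpen) (fun x _ => Set.mem_iUnion.mpr ⟨x, hV2 x⟩)
  set l : List (Set X) := t.toList.map V with hl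
  have hmem : ∀ W ∈ l, IsClopen W ∧ ∀ v ∈ W, ∀ n ∈ ballF d S, act v n ∈ W → n = 0 := by
    intro W hW
    rw [hl, List.mem_map] at hW
    obtain ⟨x, _, rfl⟩ := hW
    exact ⟨hV1 x, hV3 x⟩
  refine ⟨markChain act S l,
    (isClopen_markChain hactc l fun W hW => (hmem W hW).1).isOpen,
    markChain_sep hact0 hactadd l (fun W hW => (hmem W hW).2), ?_⟩
  intro x
  have hx : x ∈ ⋃ y ∈ t, V y := ht (Set.mem_univ x)
  obtain ⟨y, hy, hxy⟩ := Set.mem_iUnion₂.mp hx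
  have hVyl : V y ∈ l := by
    rw [hl, List.mem_map]
    exact ⟨y, Finset.mem_toList.mpr hy, rfl⟩
  exact mem_markE.mp (markChain_absorb hact0 l (V y) hVyl x hxy)

/-- The three subintervals of `[-(3R+4), 3R+4]`, each of length `2R+3`. -/
noncomputable def piece (R : ℕ) : Fin 3 → Finset ℤ
  | 0 => Finset.Icc (-(3 * (R : ℤ) + 4)) (-((R : ℤ) + 2))
  | 1 => Finset.Icc (-((R : ℤ) + 1)) ((R : ℤ) + 1)
  | 2 => Finset.Icc ((R : ℤ) + 2) (3 * (R : ℤ) + 4)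

lemma piece_diff {R : ℕ} {c : Fin 3} {s t : ℤ} (hs : s ∈ piece R c) (ht : t ∈ piece R c) :
    -(2 * (R : ℤ) + 2) ≤ s - t ∧ s - t ≤ 2 * (R : ℤ) + 2 := by
  fin_cases c <;> simp only [piece, Finset.mem_Icc] at hs ht <;> omega

lemma piece_cover {R : ℕ} {u : ℤ} (h1 : -(3 * (R : ℤ) + 4) ≤ u) (h2 : u ≤ 3 * (R : ℤ) + 4) :
    ∃ c : Fin 3, u ∈ piece R c := by
  rcases le_or_gt u (-((R : ℤ) + 2)) with h | h
  · exact ⟨0, by simp only [piece, Finset.mem_Icc]; omega⟩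
  · rcases le_or_gt u ((R : ℤ) + 1) with h' | h'
    · exact ⟨1, by simp only [piece, Finset.mem_Icc]; omega⟩
    · exact ⟨2, by simp only [piece, Finset.mem_Icc]; omega⟩

lemma piece_card (R : ℕ) (c : Fin 3) : (piece R c).card = 2 * R + 3 := by
  fin_cases c <;> simp only [piece, Int.card_Icc] <;> omega

/-- The box of shape `η`. -/
noncomputable def boxF (R : ℕ) (η : Fin d → Fin 3) : Finset (Fin d → ℤ) :=
  Fintype.piFinset fun j => piece R (η j)

lemma boxF_card (R : ℕ) (η : Fin d → Fin 3) : (boxF R η).card = (2 * R + 3) ^ d := by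
  rw [boxF, Fintype.card_piFinset]
  simp [piece_card]

end Stmt14

open Stmt14 Set in
/-- any free continuous `ℤ^d`-action on the Cantor set has dynamical
asymptotic dimension at most `3^d − 1`. -/
theorem stmt_14 (d : ℕ) (X : Type*) [TopologicalSpace X]
    (hCantor : Nonempty (X ≃ₜ (ℕ → Bool)))
    (act : X → (Fin d → ℤ) → X)
    (hact0 : ∀ x, act x 0 = x)
    (hactadd : ∀ x m n, act (act x m) n = act x (m + n))
    (hactc : ∀ n, Continuous fun x => act x n)
    (hfree : ∀ x n, act x n = x → n = 0) :
    DAD act ≤ ((3 ^ d - 1 : ℕ) : ℕ∞) := by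
  obtain ⟨e⟩ := hCantor
  haveI : CompactSpace X := e.symm.compactSpace
  have hclo : ∀ x y : X, x ≠ y → ∃ P : Set X, IsClopen P ∧ x ∈ P ∧ y ∉ P := by
    intro x y hxy
    have hne : e x ≠ e y := fun h => hxy (e.injective h)
    obtain ⟨m, hm⟩ := Function.ne_iff.mp hne
    refine ⟨(fun z => e z m) ⁻¹' {e x m}, ?_, by simp, by simpa using Ne.symm hm⟩
    exact (isClopen_discrete _).preimage ((continuous_apply m).comp e.continuous)
  have hcard3 : Fintype.card (Fin d → Fin 3) = 3 ^ d - 1 + 1 := by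
    have h1 : (1 : ℕ) ≤ 3 ^ d := Nat.one_le_pow _ _ (by norm_num)
    simp only [Fintype.card_fun, Fintype.card_fin]
    omega
  set e3 : (Fin d → Fin 3) ≃ Fin (3 ^ d - 1 + 1) := Fintype.equivFinOfCardEq hcard3 with he3
  have hDD : DADle act (3 ^ d - 1) := by
    intro F
    have hRex : ∃ R : ℕ, ∀ γ ∈ F, ∀ j, -(R : ℤ) ≤ γ j ∧ γ j ≤ (R : ℤ) := by
      refine ⟨F.sup (fun γ => Finset.univ.sup fun j => (γ j).natAbs), ?_⟩
      intro γ hγ j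
      have h1 : (γ j).natAbs ≤ Finset.univ.sup fun j => (γ j).natAbs :=
        Finset.le_sup (f := fun j => (γ j).natAbs) (Finset.mem_univ j)
      have h2 : (Finset.univ.sup fun j => (γ j).natAbs) ≤
          F.sup (fun γ => Finset.univ.sup fun j => (γ j).natAbs) :=
        Finset.le_sup (f := fun γ => Finset.univ.sup fun j => (γ j).natAbs) hγ
      have h4 : |γ j| ≤ ((F.sup (fun γ => Finset.univ.sup fun j => (γ j).natAbs) : ℕ) : ℤ) := by
        rw [Int.abs_eq_natAbs]
        exact_mod_cast le_trans h1 h2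
      exact abs_le.mp h4
    obtain ⟨R, hR⟩ := hRex
    obtain ⟨A, hAopen, hAsep, hAsyn⟩ := exists_marker act hact0 hactadd hactc hfree hclo
      (3 * R + 3)
    -- the cover
    set Us : (Fin d → Fin 3) → Set X :=
      fun η => ⋃ u ∈ boxF R η, (fun x => act x (-u)) ⁻¹' A with hUs
    have hUsmem : ∀ η x, x ∈ Us η ↔ ∃ u ∈ boxF R η, act x (-u) ∈ A := by
      intro η x; simp [hUs]
    refine ⟨fun i => Us (e3.symm i), ?_, ?_, (2 * R + 3) ^ d, ?_⟩
    · intro i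
      exact isOpen_biUnion fun u _ => hAopen.preimage (hactc (-u))
    · -- covering
      ext x
      simp only [Set.mem_iUnion, Set.mem_univ, iff_true]
      obtain ⟨n, hn, hnA⟩ := hAsyn x
      rw [mem_ballF] at hn
      have hc : ∀ j, ∃ c : Fin 3, (-n) j ∈ piece R c := by
        intro j
        have := hn j
        refine piece_cover ?_ ?_ <;> simp only [Pi.neg_apply] <;> push_cast at this ⊢ <;> omega
      choose η hη using hc
      refine ⟨e3 η, ?_⟩
      rw [e3.symm_apply_apply, hUsmem]
      exact ⟨-n, Fintype.mem_piFinset.mpr hη, by rw [neg_neg]; exact hnA⟩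
    · -- the bound
      intro i x hx
      set η := e3.symm i with hη
      obtain ⟨u₀, hu₀box, hu₀A⟩ := (hUsmem η x).mp hx
      have hu₀box' := Fintype.mem_piFinset.mp hu₀box
      -- markers near x are unique
      have hstep : ∀ p q : Fin d → ℤ, act x p ∈ A → act x q ∈ A →
          (∀ j, -(3 * (R : ℤ) + 3) ≤ q j - p j ∧ q j - p j ≤ 3 * (R : ℤ) + 3) → p = q := by
        intro p q hp hq hb
        have hmemb : q - p ∈ ballF d (3 * R + 3) := by
          rw [mem_ballF]
          intro j
          have := hb j
          simp only [Pi.sub_apply]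
          push_cast at this ⊢
          omega
        have hact2 : act (act x p) (q - p) = act x q := by
          rw [hactadd]
          congr 1
          abel
        have h0 : q - p = 0 := hAsep (act x p) hp (q - p) hmemb (by rw [hact2]; exact hq)
        exact (sub_eq_zero.mp h0).symm
      -- reach set is inside one box
      have hsub : reachSet act F (Us η) x ⊆
          (fun v => act (act x (-u₀)) v) '' (boxF R η : Set (Fin d → ℤ)) := by
        intro y hy
        obtain ⟨l, hlne, hlF, hysum, hpath⟩ := hy
        have key : ∀ k, k ≤ l.length → ∀ j, u₀ j + (l.take k).sum j ∈ piece R (η j) := by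
          intro k
          induction k with
          | zero =>
            intro _ j
            simpa using hu₀box' j
          | succ k ih =>
            intro hk j
            have hk' : k < l.length := by omega
            have ihk := ih (by omega)
            have hs : (l.take (k + 1)).sum = (l.take k).sum + l[k] :=
              List.sum_take_succ _ _ hk'
            have hmem2 : act x ((l.take (k + 1)).sum) ∈ Us η := hpath (k + 1) (by omega) (by omega)
            obtain ⟨u', hu'box, hu'A⟩ := (hUsmem η _).mp hmem2
            have hu'box' := Fintype.mem_piFinset.mp hu'box
            have hA2 : act x ((l.take (k + 1)).sum + -u') ∈ A := by
              rw [← hactadd]; exact hu'A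
            have hγ : ∀ j', -(R : ℤ) ≤ l[k] j' ∧ l[k] j' ≤ (R : ℤ) :=
              hR l[k] (hlF _ (List.getElem_mem hk')) 
            have heq : -u₀ = (l.take (k + 1)).sum + -u' := by
              refine hstep _ _ hu₀A hA2 ?_
              intro j'
              have e1 := piece_diff (ihk j') (hu'box' j')
              have e2 := hγ j'
              simp only [hs, Pi.add_apply, Pi.neg_apply]
              omega
            have heqj : u₀ j + (l.take (k + 1)).sum j = u' j := by
              have := congrFun heq j
              simp only [Pi.add_apply, Pi.neg_apply] at this
              omega
            rw [heqj]
            exact hu'box' j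
        have hkey := key l.length le_rfl
        refine ⟨u₀ + l.sum, ?_, ?_⟩
        · rw [Finset.mem_coe]
          refine Fintype.mem_piFinset.mpr fun j => ?_
          have := hkey j
          simpa [List.take_length] using this
        · show act (act x (-u₀)) (u₀ + l.sum) = y
          rw [hactadd, hysum]
          congr 1
          abel
      have hfin : ((fun v => act (act x (-u₀)) v) ''
          (boxF R η : Set (Fin d → ℤ))).Finite :=
        (Finset.finite_toSet _).image _
      refine ⟨hfin.subset hsub, ?_⟩
      calc (reachSet act F (Us η) x).ncard
          ≤ ((fun v => act (act x (-u₀)) v) '' (boxF R η : Set (Fin d → ℤ))).ncard :=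
            Set.ncard_le_ncard hsub hfin
        _ ≤ (boxF R η : Set (Fin d → ℤ)).ncard := Set.ncard_image_le (Finset.finite_toSet _)
        _ = (boxF R η).card := Set.ncard_coe_finset _
        _ = (2 * R + 3) ^ d := boxF_card R η
  -- conclude
  exact sInf_le ⟨3 ^ d - 1, rfl, hDD⟩
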